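/- Let F be a field, H a finite additive subgroup of F, and P an m-variate polynomial over F with individual degree at most |H|−1 in each variable and total degree strictly less than m(|H|−1). Then for every shift v ∈ F^m, the sum ∑_{α∈H^m} P(α + v) equals 0. -/

import Mathlib

open MvPolynomial Finset



/-- digit sum is positive for positive numbers -/
lemma digitsum_pos {p : ℕ} (hp : 2 ≤ p) {i : ℕ} (hi : 0 < i) :
    0 < (Nat.digits p i).sum := by
  induction i using Nat.strong_induction_on with
  | _ i ih =>
    rw [Nat.digits_def' hp hi]
    rcases Nat.eq_zero_or_pos (i % p) with h | h
    · have hip : p ∣ i := Nat.dvd_of_mod_eq_zero h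
      have : 0 < i / p := Nat.div_pos (Nat.le_of_dvd hi hip) (by omega)
      have := ih (i / p) (Nat.div_lt_self hi (by omega)) this
      simpa [h] using this
    · simp; omega

/-- digit sum bound -/
lemma digitsum_le {p : ℕ} (hp : 2 ≤ p) : ∀ k, ∀ j < p ^ k, (Nat.digits p j).sum ≤ k * (p - 1) := by
  intro k
  induction k with
  | zero => intro j hj; simp at hj; subst hj; simp
  | succ k ih =>
    intro j hj
    have hexp : (k+1) * (p-1) = k * (p-1) + (p-1) := by ring
    rcases Nat.eq_zero_or_pos j with rfl | hjpos
    · simp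
    rw [Nat.digits_def' hp hjpos]
    have h1 : j / p < p ^ k := by
      rw [Nat.div_lt_iff_lt_mul (by omega)]
      calc j < p ^ (k+1) := hj
        _ = p ^ k * p := by ring
    have := ih (j / p) h1
    have h2 : j % p ≤ p - 1 := by have := Nat.mod_lt j (show 0 < p by omega); omega
    simp only [List.sum_cons]
    omega

lemma digitsum_lt {p : ℕ} (hp : 2 ≤ p) :
    ∀ k, ∀ j < p ^ k, j ≠ p ^ k - 1 → (Nat.digits p j).sum < k * (p - 1) := by
  intro k
  induction k with
  | zero => intro j hj hne; rw [pow_zero] at hj hne; omega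
  | succ k ih =>
    intro j hj hne
    have hexp : (k+1) * (p-1) = k * (p-1) + (p-1) := by ring
    rcases Nat.eq_zero_or_pos j with rfl | hjpos
    · simp
      have : p ^ k < p ^ (k+1) := Nat.pow_lt_pow_succ (by omega)
      have : 1 ≤ p ^ k := Nat.one_le_pow _ _ (by omega)
      omega
    rw [Nat.digits_def' hp hjpos]
    have hppos : 0 < p := by omega
    have h1 : j / p < p ^ k := by
      rw [Nat.div_lt_iff_lt_mul hppos]
      calc j < p ^ (k+1) := hj
        _ = p ^ k * p := by ring
    have h2 : j % p ≤ p - 1 := by have := Nat.mod_lt j hppos; omega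
    simp only [List.sum_cons]
    by_cases hcase : j / p = p ^ k - 1
    · -- then j % p ≠ p - 1
      have hpk : 1 ≤ p ^ k := Nat.one_le_pow _ _ hppos
      have hjrec : j = p * (j / p) + j % p := (Nat.div_add_mod j p).symm ▸ by omega
      have hmod : j % p ≠ p - 1 := by
        intro hmp
        apply hne
        rw [hjrec, hcase, hmp]
        have : p * (p ^ k - 1) = p ^ (k+1) - p := by
          rw [Nat.mul_sub_one]
          rw [← pow_succ']
        omega
      have := digitsum_le hp k (j / p) h1
      omega
    · have := ih (j / p) h1 hcase
      omega

lemma ds_step {p : ℕ} (hp : 2 ≤ p) (i : ℕ) :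
    (Nat.digits p i).sum = i % p + (Nat.digits p (i / p)).sum := by
  rcases Nat.eq_zero_or_pos i with rfl | hi
  · simp
  · rw [Nat.digits_def' hp hi]; simp

lemma kummer_digitsum {p : ℕ} (hp : p.Prime) :
    ∀ j i, i ≤ j → ¬ p ∣ j.choose i →
      (Nat.digits p j).sum = (Nat.digits p i).sum + (Nat.digits p (j - i)).sum := by
  have : Fact p.Prime := ⟨hp⟩
  have hp2 : 2 ≤ p := hp.two_le
  have hppos : 0 < p := by omega
  intro j
  induction j using Nat.strong_induction_on with
  | _ j ih =>
    intro i hij hdvd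
    rcases Nat.eq_zero_or_pos j with rfl | hjpos
    · interval_cases i; simp
    have hlucas := Choose.choose_modEq_choose_mod_mul_choose_div_nat (p := p) (n := j) (k := i)
    have hdvd' : ¬ p ∣ (j % p).choose (i % p) * ((j / p).choose (i / p)) := by
      intro h
      exact hdvd ((Nat.modEq_zero_iff_dvd).1 (hlucas.trans ((Nat.modEq_zero_iff_dvd).2 h)))
    have hd1 : ¬ p ∣ (j % p).choose (i % p) := fun h => hdvd' (h.mul_right _)
    have hd2 : ¬ p ∣ (j / p).choose (i / p) := fun h => hdvd' (h.mul_left _)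
    have hm : i % p ≤ j % p := by
      by_contra h
      exact hd1 (by rw [Nat.choose_eq_zero_of_lt (by omega)]; exact dvd_zero p)
    have hq : i / p ≤ j / p := by
      by_contra h
      exact hd2 (by rw [Nat.choose_eq_zero_of_lt (by omega)]; exact dvd_zero p)
    have hdivlt : j / p < j := Nat.div_lt_self hjpos hp2
    have ihh := ih (j / p) hdivlt (i / p) hq hd2
    obtain ⟨e, he⟩ : ∃ e, j / p = i / p + e := ⟨_, (Nat.add_sub_cancel' hq).symm⟩
    have hee : j / p - i / p = e := by omega
    rw [hee] at ihh
    have hjd := Nat.div_add_mod j p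
    have hid := Nat.div_add_mod i p
    have hmul : p * (j / p) = p * (i / p) + p * e := by rw [he, Nat.mul_add]
    have hjmlt := Nat.mod_lt j hppos
    have himlt := Nat.mod_lt i hppos
    have hsub : j - i = (j % p - i % p) + p * e := by omega
    have hmodsub : (j - i) % p = j % p - i % p := by
      rw [hsub, Nat.add_mul_mod_self_left, Nat.mod_eq_of_lt (by omega)]
    have hdivsub : (j - i) / p = e := by
      rw [hsub, Nat.add_mul_div_left _ _ hppos, Nat.div_eq_of_lt (by omega), Nat.zero_add]
    rw [ds_step hp2 j, ds_step hp2 i, ds_step hp2 (j - i), hmodsub, hdivsub, ihh]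
    omega

lemma sum_pow_zmod {p : ℕ} [Fact p.Prime] {i : ℕ} (h : ¬(0 < i ∧ (p - 1) ∣ i)) :
    ∑ x : ZMod p, x ^ i = 0 := by
  have hp : p.Prime := Fact.out
  rcases Nat.eq_zero_or_pos i with rfl | hi
  · simp only [pow_zero, Finset.sum_const, Finset.card_univ, ZMod.card, nsmul_eq_mul, mul_one]
    exact ZMod.natCast_self p
  have hnd : ¬ (p - 1) ∣ i := fun hd => h ⟨hi, hd⟩
  have hp3 : 3 ≤ p := by
    rcases hp.two_le.lt_or_eq with h' | h'
    · omega
    · exfalso; apply hnd; rw [← h']; exact one_dvd i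
  have hmodpos : 0 < i % (p - 1) := by
    rcases Nat.eq_zero_or_pos (i % (p - 1)) with h0 | h0
    · exact absurd (Nat.dvd_of_mod_eq_zero h0) hnd
    · exact h0
  have hmodlt : i % (p - 1) < p - 1 := Nat.mod_lt _ (by omega)
  have key : ∀ x : ZMod p, x ^ i = x ^ (i % (p - 1)) := by
    intro x
    by_cases hx : x = 0
    · rw [hx, zero_pow (by omega), zero_pow (by omega)]
    · conv_lhs => rw [← Nat.div_add_mod i (p - 1)]
      rw [pow_add, pow_mul, ZMod.pow_card_sub_one_eq_one hx, one_pow, one_mul]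
  rw [Finset.sum_congr rfl (fun x _ => key x)]
  apply FiniteField.sum_pow_lt_card_sub_one
  rw [ZMod.card]
  exact hmodlt

lemma digitsum_ge {p : ℕ} (hp : p.Prime) {i : ℕ} (hi : 0 < i) (hd : (p - 1) ∣ i) :
    p - 1 ≤ (Nat.digits p i).sum := by
  have hpos := digitsum_pos hp.two_le hi
  rcases hp.two_le.lt_or_eq with h' | h'
  · have hmod : p % (p - 1) = 1 := by
      have h1 := Nat.add_mod_left (p - 1) 1
      rw [Nat.mod_eq_of_lt (show (1:ℕ) < p - 1 by omega),
        Nat.sub_add_cancel (show 1 ≤ p by omega)] at h1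
      exact h1
    have hme := Nat.modEq_digits_sum (p - 1) p hmod i
    have : (p - 1) ∣ (Nat.digits p i).sum := by
      have h0 : i ≡ 0 [MOD p - 1] := (Nat.modEq_zero_iff_dvd).2 hd
      exact (Nat.modEq_zero_iff_dvd).1 (hme.symm.trans h0)
    exact Nat.le_of_dvd hpos this
  · omega

lemma sum_pow_linear_comb {F : Type*} [Field F] {p : ℕ} [Fact p.Prime] [CharP F p] :
    ∀ (k : ℕ) (e : Fin k → F) (j : ℕ), (Nat.digits p j).sum < k * (p - 1) →
      ∑ c : Fin k → ZMod p,
        (∑ t, (ZMod.castHom (dvd_refl p) F) (c t) * e t) ^ j = 0 := by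
  have hp : p.Prime := Fact.out
  set φ := ZMod.castHom (dvd_refl p) F with hφ
  intro k
  induction k with
  | zero => intro e j hj; simp at hj
  | succ k ih =>
    intro e j hj
    rw [← (Fin.consEquiv fun _ : Fin (k + 1) => ZMod p).sum_comp, Fintype.sum_prod_type]
    simp only [Fin.consEquiv_apply]
    have hinner : ∀ (x : ZMod p) (c : Fin k → ZMod p),
        (∑ t : Fin (k + 1), φ ((Fin.cons x c : Fin (k+1) → ZMod p) t) * e t) ^ j
          = (φ x * e 0 + ∑ t : Fin k, φ (c t) * e t.succ) ^ j := by
      intro x c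
      rw [Fin.sum_univ_succ]
      simp [Fin.cons_zero, Fin.cons_succ]
    simp_rw [hinner, add_pow]
    rw [Finset.sum_comm]
    -- now : ∑ c, ∑ x, ∑ i in range (j+1), ...
    have hswap : ∀ c : Fin k → ZMod p,
        (∑ x : ZMod p, ∑ i ∈ Finset.range (j + 1),
          (φ x * e 0) ^ i * (∑ t : Fin k, φ (c t) * e t.succ) ^ (j - i) * (j.choose i : F))
        = ∑ i ∈ Finset.range (j + 1),
            (∑ x : ZMod p, (φ x * e 0) ^ i) *
              ((∑ t : Fin k, φ (c t) * e t.succ) ^ (j - i) * (j.choose i : F)) := by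
      intro c
      rw [Finset.sum_comm]
      exact Finset.sum_congr rfl fun i _ => by
        rw [Finset.sum_mul]
        exact Finset.sum_congr rfl fun x _ => by ring
    simp_rw [hswap]
    rw [Finset.sum_comm]
    apply Finset.sum_eq_zero
    intro i hi
    have hij : i ≤ j := by
      rw [Finset.mem_range] at hi; omega
    by_cases hcase : 0 < i ∧ (p - 1) ∣ i
    · by_cases hdvd : p ∣ j.choose i
      · have hc0 : (j.choose i : F) = 0 := (CharP.cast_eq_zero_iff F p _).2 hdvd
        simp [hc0]
      · have hkum := kummer_digitsum hp j i hij hdvd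
        have hge := digitsum_ge hp hcase.1 hcase.2
        have hlt : (Nat.digits p (j - i)).sum < k * (p - 1) := by
          have hexp : (k + 1) * (p - 1) = k * (p - 1) + (p - 1) := by ring
          omega
        have hzero := ih (fun t => e t.succ) (j - i) hlt
        rw [← Finset.mul_sum, ← Finset.sum_mul, hzero, zero_mul, mul_zero]
    · have hz : ∑ x : ZMod p, (φ x * e 0) ^ i = 0 := by
        simp_rw [mul_pow, ← map_pow, ← Finset.sum_mul, ← map_sum, sum_pow_zmod hcase,
          map_zero, zero_mul]
      apply Finset.sum_eq_zero
      intro c _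
      rw [hz, zero_mul]

lemma sum_pow_addSubgroup {F : Type*} [Field F] (H : AddSubgroup F) [Fintype H]
    (hq : 2 ≤ Fintype.card H) {i : ℕ} (hi : i ≤ Fintype.card H - 2) :
    ∑ a : H, (a : F) ^ i = 0 := by
  obtain ⟨x, hx⟩ := Fintype.exists_ne_of_one_lt_card (by omega : 1 < Fintype.card H) (0 : H)
  have hcard0 : (Fintype.card H : F) = 0 := by
    have h1 : (Fintype.card H) • x = 0 := card_nsmul_eq_zero
    have h3 : ((Fintype.card H • x : H) : F) = 0 := by rw [h1]; rfl
    rw [AddSubgroupClass.coe_nsmul, nsmul_eq_mul] at h3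
    rcases mul_eq_zero.1 h3 with h | h
    · exact h
    · exact absurd (Subtype.ext (by simpa using h)) hx
  set p := ringChar F with hpdef
  haveI : CharP F p := ringChar.charP F
  have hpdvd : p ∣ Fintype.card H := (CharP.cast_eq_zero_iff F p _).1 hcard0
  have hp : p.Prime := by
    rcases CharP.char_is_prime_or_zero F p with h | h
    · exact h
    · exfalso; rw [h] at hpdvd; omega
  haveI : Fact p.Prime := ⟨hp⟩
  have htor : ∀ y : H, p • y = 0 := by
    intro y
    apply Subtype.ext
    have h4 : ((p • y : H) : F) = (p : F) * (y : F) := by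
      rw [AddSubgroupClass.coe_nsmul, nsmul_eq_mul]
    rw [CharP.cast_eq_zero F p, zero_mul] at h4
    simpa using h4
  haveI : Module (ZMod p) H := AddCommGroup.zmodModule htor
  haveI h2 : Module.Finite (ZMod p) H := inferInstance
  set k := Module.finrank (ZMod p) H with hk
  let b : Module.Basis (Fin k) (ZMod p) H := Module.finBasis (ZMod p) H
  have hcard : Fintype.card H = p ^ k := by
    rw [Module.card_eq_pow_finrank (K := ZMod p) (V := H), ZMod.card]
  have hsum : ∑ a : H, (a : F) ^ i
      = ∑ c : Fin k → ZMod p,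
          (∑ t, (ZMod.castHom (dvd_refl p) F) (c t) * ((b t : H) : F)) ^ i := by
    rw [← Function.Bijective.sum_comp (b.equivFun.symm.bijective)
      (fun a : H => ((a : F)) ^ i)]
    apply Finset.sum_congr rfl
    intro c _
    congr 1
    rw [Module.Basis.equivFun_symm_apply]
    rw [AddSubmonoidClass.coe_finset_sum]
    apply Finset.sum_congr rfl
    intro t _
    have h1 : c t • b t = (c t).val • b t := by
      conv_lhs => rw [← ZMod.natCast_rightInverse (c t)]
      rw [Nat.cast_smul_eq_nsmul]
    rw [h1, AddSubgroupClass.coe_nsmul, nsmul_eq_mul, ZMod.castHom_apply, ZMod.natCast_val]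
  rw [hsum]
  apply sum_pow_linear_comb
  apply digitsum_lt hp.two_le
  · omega
  · omega

lemma sum_pow_addSubgroup_shifted {F : Type*} [Field F] (H : AddSubgroup F) [Fintype H]
    (hq : 2 ≤ Fintype.card H) {d : ℕ} (hd : d ≤ Fintype.card H - 2) (v : F) :
    ∑ a : H, ((a : F) + v) ^ d = 0 := by
  simp_rw [add_pow]
  rw [Finset.sum_comm]
  apply Finset.sum_eq_zero
  intro n hn
  rw [Finset.mem_range] at hn
  have : ∑ a : H, (a : F) ^ n * v ^ (d - n) * (d.choose n : F)
      = (∑ a : H, (a : F) ^ n) * (v ^ (d - n) * (d.choose n : F)) := by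
    rw [Finset.sum_mul]
    exact Finset.sum_congr rfl fun a _ => by ring
  rw [this, sum_pow_addSubgroup H hq (by omega), zero_mul]

/-- Shifted summation over a finite additive subgroup `H`: if `P` has
individual degree at most `|H|-1` in each variable and total degree
strictly less than `m(|H|-1)`, the sum of `P(α+v)` over `α ∈ H^m` is `0`. -/
theorem sum_over_add_subgroup_shifted_eq_zero
    {F : Type*} [Field F] (H : AddSubgroup F) [Fintype H]
    (m : ℕ) (hm : 0 < m)
    (P : MvPolynomial (Fin m) F)
    (hP : ∀ i, P.degreeOf i ≤ Fintype.card H - 1)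
    (htot : P.totalDegree < m * (Fintype.card H - 1))
    (v : Fin m → F) :
    ∑ α : Fin m → H, MvPolynomial.eval (fun i => (α i : F) + v i) P = 0 := by
  have hq1 : 1 ≤ Fintype.card H := Fintype.card_pos
  have hq2 : 2 ≤ Fintype.card H := by
    by_contra h
    have : Fintype.card H - 1 = 0 := by omega
    rw [this, Nat.mul_zero] at htot
    omega
  -- expand the evaluation
  have heval : ∀ α : Fin m → H,
      MvPolynomial.eval (fun i => (α i : F) + v i) P
        = ∑ d ∈ P.support, P.coeff d * ∏ i, ((α i : F) + v i) ^ d i := by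
    intro α
    rw [MvPolynomial.eval_eq']
  simp_rw [heval]
  rw [Finset.sum_comm]
  apply Finset.sum_eq_zero
  intro d hd
  -- find a coordinate with small degree
  have hdle : ∀ i, d i ≤ Fintype.card H - 1 := by
    intro i
    calc d i ≤ P.degreeOf i := by
          rw [MvPolynomial.degreeOf_eq_sup]
          exact Finset.le_sup (f := fun m => m i) hd
      _ ≤ Fintype.card H - 1 := hP i
  have hsum_le : ∑ i, d i ≤ P.totalDegree := by
    rw [MvPolynomial.totalDegree]
    have : (Finsupp.sum d fun _ n => n) = ∑ i, d i := Finsupp.sum_fintype _ _ (fun _ => rfl)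
    rw [← this]
    exact Finset.le_sup (f := fun s => s.sum fun _ e => e) hd
  have hex : ∃ i, d i ≤ Fintype.card H - 2 := by
    by_contra h
    push_neg at h
    have hall : ∀ i : Fin m, d i = Fintype.card H - 1 := by
      intro i
      have := h i
      have := hdle i
      omega
    have : ∑ i : Fin m, d i = m * (Fintype.card H - 1) := by
      rw [Finset.sum_congr rfl (fun i _ => hall i), Finset.sum_const, Finset.card_univ,
        Fintype.card_fin, smul_eq_mul]
    omega
  obtain ⟨i0, hi0⟩ := hex
  rw [← Finset.mul_sum]
  have hprod : ∑ α : Fin m → H, ∏ i, ((α i : F) + v i) ^ d i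
      = ∏ i, ∑ a : H, ((a : F) + v i) ^ d i := by
    rw [Finset.prod_univ_sum]
    rw [Fintype.piFinset_univ]
  rw [hprod, Finset.prod_eq_zero (Finset.mem_univ i0)
    (sum_pow_addSubgroup_shifted H hq2 hi0 (v i0)), mul_zero]
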